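/- Suppose n ≥ 2 and for each task q there is a unique dominating agent i* q, i.e., f (i* q) q > f j q for every agent j ≠ i* q. Let γ̲ = min_{i,q} γ i q > 0 and δ = min_q (f (i* q) q − max_{j ≠ i* q} f j q) > 0, and let W̄ be the matrix with W̄ i q = 1 if i = i* q and W̄ i q = 0 otherwise. Then every PBRAG trajectory W satisfies W t i q = W̄ i q for all agents i, all tasks q, and all t ≥ 2 * ⌈1 / (γ̲ * δ)⌉. -/

import Mathlib

open Finset Filter

noncomputable def fsMax (s : Finset ℝ) : ℝ := WithBot.unbotD 0 s.max

noncomputable def fsMin (s : Finset ℝ) : ℝ := WithTop.untopD 0 s.min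

noncomputable def fsSubmax (s : Finset ℝ) : ℝ := fsMax (s.filter (fun x => x < fsMax s))

/-- Agent `i` is dominating for task `q`. -/
def Dominating {n m : ℕ} (f : Fin n → Fin m → ℝ) (i : Fin n) (q : Fin m) : Prop :=
  ∀ j, f j q ≤ f i q

/-- Maximum of `g j` over all `j ≠ i` (0 if that set is empty). -/
noncomputable def maxErase {n : ℕ} (i : Fin n) (g : Fin n → ℝ) : ℝ :=
  fsMax ((Finset.univ.erase i).image g)

/-- Utility of agent `i` in the weight game. -/
noncomputable def Uutil {n m : ℕ} (f : Fin n → Fin m → ℝ) (w : Fin n → Fin m → ℝ)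
    (i : Fin n) : ℝ :=
  ∑ q, (f i q * w i q - maxErase i (fun j => f j q * w j q) * w i q)

/-- All entries of the matrix lie in `[0,1]`. -/
def InUnit {n m : ℕ} (w : Fin n → Fin m → ℝ) : Prop :=
  ∀ i q, w i q ∈ Set.Icc (0 : ℝ) 1

/-- Nash equilibrium of the weight game. -/
def IsNashW {n m : ℕ} (f : Fin n → Fin m → ℝ) (w : Fin n → Fin m → ℝ) : Prop :=
  ∀ i, ∀ w' : Fin m → ℝ, (∀ q, w' q ∈ Set.Icc (0 : ℝ) 1) →
    Uutil f (Function.update w i w') i ≤ Uutil f w i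

noncomputable def clamp (x : ℝ) : ℝ := max 0 (min x 1)

/-- One step of the projected best-response ascending gradient dynamics. -/
noncomputable def pbrag {n m : ℕ} (f γ : Fin n → Fin m → ℝ)
    (w : Fin n → Fin m → ℝ) : Fin n → Fin m → ℝ :=
  fun i q => clamp (w i q + γ i q * (f i q - maxErase i (fun j => f j q * w j q)))

lemma fsMax_eq_max' {s : Finset ℝ} (h : s.Nonempty) : fsMax s = s.max' h := by
  rw [fsMax, ← Finset.coe_max' h, WithBot.unbotD_coe]

lemma fsMin_eq_min' {s : Finset ℝ} (h : s.Nonempty) : fsMin s = s.min' h := by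
  rw [fsMin, ← Finset.coe_min' h, WithTop.untopD_coe]

lemma le_fsMax {s : Finset ℝ} {a : ℝ} (h : a ∈ s) : a ≤ fsMax s := by
  rw [fsMax_eq_max' ⟨a, h⟩]; exact Finset.le_max' s a h

lemma fsMax_le {s : Finset ℝ} {c : ℝ} (h : s.Nonempty) (hc : ∀ x ∈ s, x ≤ c) :
    fsMax s ≤ c := by
  rw [fsMax_eq_max' h]; exact Finset.max'_le s h c hc

lemma fsMin_le {s : Finset ℝ} {a : ℝ} (h : a ∈ s) : fsMin s ≤ a := by
  rw [fsMin_eq_min' ⟨a, h⟩]; exact Finset.min'_le s a h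

theorem pbrag_finite_time_convergence {n m : ℕ} (hn : 2 ≤ n) (f : Fin n → Fin m → ℝ)
    (hf : ∀ i q, 0 ≤ f i q)
    (istar : Fin m → Fin n)
    (hstar : ∀ q, ∀ j, j ≠ istar q → f j q < f (istar q) q)
    (γ : Fin n → Fin m → ℝ) (hγ : ∀ i q, 0 < γ i q)
    (γlow : ℝ)
    (hγlow : γlow = fsMin (Finset.univ.image (fun p : Fin n × Fin m => γ p.1 p.2)))
    (hγlowpos : 0 < γlow)
    (δ : ℝ)
    (hδ : δ = fsMin (Finset.univ.image
      (fun q => f (istar q) q - maxErase (istar q) (fun j => f j q))))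
    (hδpos : 0 < δ)
    (W : ℕ → Fin n → Fin m → ℝ)
    (hW0 : InUnit (W 0)) (hWs : ∀ t, W (t + 1) = pbrag f γ (W t)) :
    ∀ (i : Fin n) (q : Fin m) (t : ℕ), 2 * ⌈1 / (γlow * δ)⌉ ≤ (t : ℤ) →
      W t i q = if i = istar q then 1 else 0 := by
  set c := γlow * δ with hc_def
  have hc : 0 < c := mul_pos hγlowpos hδpos
  -- erase is nonempty
  have hne : ∀ i : Fin n, ((Finset.univ : Finset (Fin n)).erase i).Nonempty := by
    intro i
    rw [← Finset.card_pos, Finset.card_erase_of_mem (Finset.mem_univ i), Finset.card_univ,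
      Fintype.card_fin]
    omega
  have le_maxE : ∀ (i j : Fin n) (g : Fin n → ℝ), j ≠ i → g j ≤ maxErase i g := by
    intro i j g hj
    exact le_fsMax (Finset.mem_image_of_mem g (Finset.mem_erase.2 ⟨hj, Finset.mem_univ j⟩))
  have maxE_le : ∀ (i : Fin n) (g : Fin n → ℝ) (cc : ℝ), (∀ j, j ≠ i → g j ≤ cc) →
      maxErase i g ≤ cc := by
    intro i g cc h
    apply fsMax_le ((hne i).image g)
    intro x hx
    obtain ⟨j, hj, rfl⟩ := Finset.mem_image.1 hx
    exact h j (Finset.mem_erase.1 hj).1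
  have hγle : ∀ i q, γlow ≤ γ i q := by
    intro i q; rw [hγlow]
    exact fsMin_le (Finset.mem_image_of_mem _ (Finset.mem_univ (i, q)))
  have hδle : ∀ q, δ ≤ f (istar q) q - maxErase (istar q) (fun j => f j q) := by
    intro q; rw [hδ]
    exact fsMin_le (Finset.mem_image_of_mem _ (Finset.mem_univ q))
  have hIU : ∀ t, InUnit (W t) := by
    intro t; induction t with
    | zero => exact hW0
    | succ t _ =>
      intro i q; rw [hWs t]
      exact ⟨le_max_left _ _, max_le (by norm_num) (min_le_right _ _)⟩
  -- the dominating entry increases by at least c each step (until clamped at 1)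
  have stepUp : ∀ t q, min 1 (W t (istar q) q + c) ≤ W (t + 1) (istar q) q := by
    intro t q
    rw [hWs t]
    show min 1 _ ≤ clamp _
    have hM : maxErase (istar q) (fun j => f j q * W t j q) ≤
        maxErase (istar q) (fun j => f j q) := by
      apply maxE_le
      intro j hj
      calc f j q * W t j q ≤ f j q * 1 :=
            mul_le_mul_of_nonneg_left (hIU t j q).2 (hf j q)
        _ = f j q := mul_one _
        _ ≤ maxErase (istar q) (fun j => f j q) := le_maxE (istar q) j (fun k => f k q) hj
    have hincr : c ≤ γ (istar q) q *
        (f (istar q) q - maxErase (istar q) (fun j => f j q * W t j q)) := by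
      rw [hc_def]
      apply mul_le_mul (hγle _ _) (le_trans (hδle q) (by linarith)) hδpos.le (hγ _ _).le
    calc min 1 (W t (istar q) q + c)
        ≤ min (W t (istar q) q + γ (istar q) q *
            (f (istar q) q - maxErase (istar q) (fun j => f j q * W t j q))) 1 := by
          rw [min_comm]; exact min_le_min (add_le_add_right hincr _) le_rfl
      _ ≤ clamp _ := le_max_right _ _
  -- once the dominating entry is 1, other entries decrease by at least c each step
  have stepDown : ∀ t q j, j ≠ istar q → W t (istar q) q = 1 →
      W (t + 1) j q ≤ max 0 (W t j q - c) := by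
    intro t q j hj h1
    rw [hWs t]
    show clamp _ ≤ _
    have hM : f (istar q) q ≤ maxErase j (fun k => f k q * W t k q) := by
      have := le_maxE j (istar q) (fun k => f k q * W t k q) (Ne.symm hj)
      simpa [h1] using this
    have hfj : f j q ≤ maxErase (istar q) (fun k => f k q) := le_maxE (istar q) j (fun k => f k q) hj
    have hdec : γ j q * (f j q - maxErase j (fun k => f k q * W t k q)) ≤ -c := by
      have h1' : f j q - maxErase j (fun k => f k q * W t k q) ≤ -δ := by
        have := hδle q; linarith
      calc γ j q * (f j q - maxErase j (fun k => f k q * W t k q))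
          ≤ γ j q * (-δ) := mul_le_mul_of_nonneg_left h1' (hγ _ _).le
        _ ≤ γlow * (-δ) := mul_le_mul_of_nonpos_right (hγle _ _) (by linarith)
        _ = -c := by rw [hc_def]; ring
    calc clamp (W t j q + γ j q * (f j q - maxErase j (fun k => f k q * W t k q)))
        ≤ max 0 (W t j q + γ j q * (f j q - maxErase j (fun k => f k q * W t k q))) :=
          max_le_max le_rfl (min_le_left _ _)
      _ ≤ max 0 (W t j q - c) := max_le_max le_rfl (by linarith)
  set T : ℕ := (⌈1 / c⌉).toNat with hT_def
  have hceilpos : 0 < ⌈1 / c⌉ := Int.ceil_pos.2 (by positivity)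
  have hTcast : (T : ℤ) = ⌈1 / c⌉ := Int.toNat_of_nonneg hceilpos.le
  have hT1 : (1 : ℝ) ≤ (T : ℝ) * c := by
    have h1 : (1 / c : ℝ) ≤ (T : ℝ) := by
      have := Int.le_ceil (1 / c)
      rw [← hTcast] at this
      exact_mod_cast this
    calc (1 : ℝ) = (1 / c) * c := by field_simp
      _ ≤ (T : ℝ) * c := mul_le_mul_of_nonneg_right h1 hc.le
  have growth : ∀ (t : ℕ) (q : Fin m), min 1 ((t : ℝ) * c) ≤ W t (istar q) q := by
    intro t
    induction t with
    | zero => intro q; simpa using (hW0 (istar q) q).1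
    | succ t ih =>
      intro q
      have key : min 1 (((t + 1 : ℕ) : ℝ) * c) ≤ min 1 (min 1 ((t : ℝ) * c) + c) := by
        apply le_min (min_le_left _ _)
        rcases le_total ((t : ℝ) * c) 1 with h | h
        · rw [min_eq_right h]
          have : ((t + 1 : ℕ) : ℝ) * c = (t : ℝ) * c + c := by push_cast; ring
          rw [this]
          exact min_le_right _ _
        · rw [min_eq_left h]
          exact le_trans (min_le_left _ _) (by linarith)
      calc min 1 (((t + 1 : ℕ) : ℝ) * c) ≤ min 1 (min 1 ((t : ℝ) * c) + c) := key
        _ ≤ min 1 (W t (istar q) q + c) := min_le_min le_rfl (by linarith [ih q])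
        _ ≤ W (t + 1) (istar q) q := stepUp t q
  have hone : ∀ q t, T ≤ t → W t (istar q) q = 1 := by
    intro q t ht
    refine le_antisymm (hIU t _ _).2 ?_
    have h1 : (1 : ℝ) ≤ (t : ℝ) * c :=
      le_trans hT1 (mul_le_mul_of_nonneg_right (Nat.cast_le.2 ht) hc.le)
    have := growth t q
    rwa [min_eq_left h1] at this
  have decay : ∀ q j, j ≠ istar q → ∀ s, W (T + s) j q ≤ max 0 (1 - (s : ℝ) * c) := by
    intro q j hj s
    induction s with
    | zero => simpa using le_trans (hIU T j q).2 (by norm_num)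
    | succ s ih =>
      have h1 : W (T + s) (istar q) q = 1 := hone q (T + s) (Nat.le_add_right _ _)
      calc W (T + (s + 1)) j q = W ((T + s) + 1) j q := by ring_nf
        _ ≤ max 0 (W (T + s) j q - c) := stepDown (T + s) q j hj h1
        _ ≤ max 0 (max 0 (1 - (s : ℝ) * c) - c) :=
            max_le_max le_rfl (sub_le_sub_right ih c)
        _ ≤ max 0 (1 - ((s + 1 : ℕ) : ℝ) * c) := by
            apply max_le (le_max_left _ _)
            rcases le_total (1 - (s : ℝ) * c) 0 with h | h
            · rw [max_eq_left h]
              exact le_trans (by linarith) (le_max_left _ _)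
            · rw [max_eq_right h]
              refine le_trans (le_of_eq ?_) (le_max_right _ _)
              push_cast; ring
  intro i q t ht
  have h2T : 2 * T ≤ t := by
    have : ((2 * T : ℕ) : ℤ) ≤ (t : ℤ) := by push_cast [hTcast]; linarith
    exact_mod_cast this
  by_cases hi : i = istar q
  · subst hi
    simp only [if_pos rfl]
    exact hone q t (by omega)
  · rw [if_neg hi]
    obtain ⟨s, hs, rfl⟩ : ∃ s, T ≤ s ∧ t = T + s := ⟨t - T, by omega, by omega⟩
    have hsc : (1 : ℝ) - (s : ℝ) * c ≤ 0 := by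
      have : (1 : ℝ) ≤ (s : ℝ) * c :=
        le_trans hT1 (mul_le_mul_of_nonneg_right (Nat.cast_le.2 hs) hc.le)
      linarith
    have := decay q i hi s
    rw [max_eq_left hsc] at this
    exact le_antisymm this (hIU _ i q).1
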